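/- Let (A,d,⟨·,·⟩) be a cochain complex with pairing, B ⊆ A a subcomplex, and A = H ⊕ im d ⊕ C a Hodge decomposition relative to B, with associated special propagator P^A. Suppose π : A → A is a symmetric projection with image B which is a quasi-isomorphism. Then P := (id − π)∘P^A is a propagator with respect to π (i.e. id + d∘P + P∘d = π and ⟨Px,y⟩ = (−1)^{deg x}⟨x,Py⟩). If moreover π respects the Hodge decompositions of A and B, then P is special. -/

import Mathlib

noncomputable section

/-- A cochain complex over `ℝ` (with a `ℤ`-grading realized as an internal direct sum
of submodules) together with a graded-symmetric pairing of degree `n` compatible with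
the differential. -/
structure PairedComplex (A : Type*) [AddCommGroup A] [Module ℝ A] where
  /-- the grading `A = ⊕ᵢ Aⁱ` -/
  grading : ℤ → Submodule ℝ A
  internal : DirectSum.IsInternal grading
  /-- the differential -/
  d : A →ₗ[ℝ] A
  d_degree : ∀ i : ℤ, ∀ x ∈ grading i, d x ∈ grading (i + 1)
  d_sq : ∀ x : A, d (d x) = 0
  /-- the degree of the pairing -/
  n : ℤ
  /-- the pairing -/
  pair : A →ₗ[ℝ] A →ₗ[ℝ] ℝ
  pair_degree : ∀ i j : ℤ, i + j ≠ n → ∀ x ∈ grading i, ∀ y ∈ grading j, pair x y = 0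
  pair_symm : ∀ i j : ℤ, ∀ x ∈ grading i, ∀ y ∈ grading j,
      pair x y = (-1 : ℝ) ^ (i * j) * pair y x
  pair_d : ∀ i : ℤ, ∀ x ∈ grading i, ∀ y : A,
      pair (d x) y = (-1 : ℝ) ^ (1 + i) * pair x (d y)

namespace PairedComplex

variable {A : Type*} [AddCommGroup A] [Module ℝ A] (X : PairedComplex A)

/-- `f` is homogeneous of degree `k`. -/
def IsDegree (f : A →ₗ[ℝ] A) (k : ℤ) : Prop :=
  ∀ i : ℤ, ∀ x ∈ X.grading i, f x ∈ X.grading (i + k)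

/-- A chain map: a degree `0` map commuting with the differential. -/
def IsChainMap (f : A →ₗ[ℝ] A) : Prop :=
  X.IsDegree f 0 ∧ ∀ x : A, f (X.d x) = X.d (f x)

/-- A projection: an idempotent chain map. -/
def IsProjection (p : A →ₗ[ℝ] A) : Prop :=
  X.IsChainMap p ∧ ∀ x : A, p (p x) = p x

/-- The projection `π_P = id + d∘P + P∘d` associated to a homotopy operator `P`. -/
def assocProj (P : A →ₗ[ℝ] A) : A →ₗ[ℝ] A :=
  LinearMap.id + X.d ∘ₗ P + P ∘ₗ X.d

/-- A homotopy operator: a degree `-1` map such that `−d∘P − P∘d` is a projection. -/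
def IsHomotopyOperator (P : A →ₗ[ℝ] A) : Prop :=
  X.IsDegree P (-1) ∧ X.IsProjection (-(X.d ∘ₗ P) - P ∘ₗ X.d)

/-- A homotopy operator `P` is special if `P∘P = 0` and `P∘d∘P = −P`. -/
def IsSpecial (P : A →ₗ[ℝ] A) : Prop :=
  (∀ x : A, P (P x) = 0) ∧ ∀ x : A, P (X.d (P x)) = -(P x)

/-- The symmetry property `⟨Px,y⟩ = (−1)^{deg x} ⟨x,Py⟩` of a propagator. -/
def IsSymmetricDeg (P : A →ₗ[ℝ] A) : Prop :=
  ∀ i : ℤ, ∀ x ∈ X.grading i, ∀ y : A,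
    X.pair (P x) y = (-1 : ℝ) ^ i * X.pair x (P y)

/-- A propagator: a homotopy operator satisfying the symmetry property. -/
def IsPropagator (P : A →ₗ[ℝ] A) : Prop :=
  X.IsHomotopyOperator P ∧ X.IsSymmetricDeg P

/-- A symmetric operator: `⟨px,y⟩ = ⟨x,py⟩`. -/
def IsSymmetric (p : A →ₗ[ℝ] A) : Prop :=
  ∀ x y : A, X.pair (p x) y = X.pair x (p y)

/-- Nondegeneracy of the pairing. -/
def Nondegenerate : Prop :=
  ∀ x : A, (∀ y : A, X.pair x y = 0) → x = 0

/-- The pairing is perfect: the musical map `x ↦ ⟨x,·⟩` is an isomorphism onto the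
graded dual, i.e. it is injective and every linear functional on `A^{n-i}` is
represented by an element of `A^i`. -/
def Perfect : Prop :=
  X.Nondegenerate ∧
    ∀ i : ℤ, ∀ φ : ↥(X.grading (X.n - i)) →ₗ[ℝ] ℝ,
      ∃ x ∈ X.grading i, ∀ y : ↥(X.grading (X.n - i)), X.pair x (y : A) = φ y

/-- A chain map induces an isomorphism on cohomology (elementwise formulation). -/
def IsQuasiIso (f : A →ₗ[ℝ] A) : Prop :=
  (∀ x : A, X.d x = 0 → ∃ y : A, X.d y = 0 ∧ ∃ z : A, f y - x = X.d z) ∧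
  (∀ y : A, X.d y = 0 → (∃ z : A, f y = X.d z) → ∃ w : A, y = X.d w)

/-- A graded subspace: spanned by its homogeneous elements. -/
def IsGradedSubspace (B : Submodule ℝ A) : Prop :=
  ∀ x ∈ B, x ∈ ⨆ i : ℤ, B ⊓ X.grading i

/-- A subcomplex: a graded subspace preserved by the differential. -/
def IsSubcomplex (B : Submodule ℝ A) : Prop :=
  X.IsGradedSubspace B ∧ ∀ x ∈ B, X.d x ∈ B

/-- The inclusion `B ↪ A` is a quasi-isomorphism (elementwise formulation). -/
def InclQuasiIso (B : Submodule ℝ A) : Prop :=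
  (∀ x : A, X.d x = 0 → ∃ b ∈ B, X.d b = 0 ∧ ∃ z : A, x - b = X.d z) ∧
  (∀ b ∈ B, X.d b = 0 → (∃ z : A, b = X.d z) → ∃ c ∈ B, b = X.d c)

/-- The restriction of the pairing to `B` is perfect. -/
def SubPerfect (B : Submodule ℝ A) : Prop :=
  (∀ x ∈ B, (∀ y ∈ B, X.pair x y = 0) → x = 0) ∧
    ∀ i : ℤ, ∀ φ : ↥(B ⊓ X.grading (X.n - i)) →ₗ[ℝ] ℝ,
      ∃ x ∈ B ⊓ X.grading i, ∀ y : ↥(B ⊓ X.grading (X.n - i)), X.pair x (y : A) = φ y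

/-- The orthogonal complement `B^⊥ = {x | ⟨x,b⟩ = 0 ∀ b ∈ B}`. -/
def perp (B : Submodule ℝ A) : Submodule ℝ A where
  carrier := {x : A | ∀ b ∈ B, X.pair x b = 0}
  add_mem' := by
    intro x y hx hy
    intro b hb
    have hx' := hx b hb
    have hy' := hy b hb
    simp only [map_add, LinearMap.add_apply, hx', hy', add_zero]
  zero_mem' := by
    intro b hb
    simp
  smul_mem' := by
    intro c x hx b hb
    have hx' := hx b hb
    simp only [map_smul, LinearMap.smul_apply, hx', smul_zero]

/-- A harmonic subspace: a graded subspace `H` with `ker d = H ⊕ im d`. -/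
def IsHarmonic (H : Submodule ℝ A) : Prop :=
  X.IsGradedSubspace H ∧ H ≤ LinearMap.ker X.d ∧
    H ⊓ LinearMap.range X.d = ⊥ ∧ H ⊔ LinearMap.range X.d = LinearMap.ker X.d

/-- A Hodge decomposition `B = H ⊕ d(B) ⊕ C` of a subcomplex `B ⊆ A` (with respect to
the restricted pairing); taking `B = ⊤` gives a Hodge decomposition of `A`. -/
def IsHodgeOn (B H C : Submodule ℝ A) : Prop :=
  H ≤ B ∧ C ≤ B ∧ X.IsGradedSubspace H ∧ X.IsGradedSubspace C ∧
  H ≤ LinearMap.ker X.d ∧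
  H ⊓ Submodule.map X.d B = ⊥ ∧
  H ⊔ Submodule.map X.d B = LinearMap.ker X.d ⊓ B ∧
  C ⊓ LinearMap.ker X.d = ⊥ ∧
  C ⊔ (LinearMap.ker X.d ⊓ B) = B ∧
  (∀ c ∈ C, ∀ c' ∈ C, X.pair c c' = 0) ∧
  (∀ c ∈ C, ∀ h ∈ H, X.pair c h = 0)

/-- A Hodge decomposition `A = H ⊕ im d ⊕ C` of the full complex. -/
def IsHodge (H C : Submodule ℝ A) : Prop :=
  X.IsHodgeOn ⊤ H C

/-- `A` is of Hodge type if it admits a Hodge decomposition. -/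
def IsHodgeType : Prop :=
  ∃ H C : Submodule ℝ A, X.IsHodge H C

/-- The operator `P_{H,C}` canonically associated to a Hodge decomposition `(H,C)`:
`P(dy) = −y` for `y ∈ C`, and `P = 0` on `H ⊕ C`. -/
def IsHodgeOperator (H C : Submodule ℝ A) (P : A →ₗ[ℝ] A) : Prop :=
  (∀ y ∈ C, P (X.d y) = -y) ∧ (∀ x ∈ H, P x = 0) ∧ ∀ x ∈ C, P x = 0

/-- The degenerate subspace `A_deg = {a | ⟨a,x⟩ = 0 ∀ x}`. -/
def degSub : Submodule ℝ A := X.perp ⊤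

/-- The induced pairing on cohomology is nondegenerate (elementwise formulation). -/
def CohomNondeg : Prop :=
  ∀ x : A, X.d x = 0 → (∀ y : A, X.d y = 0 → X.pair x y = 0) → ∃ z : A, x = X.d z

/-- The induced pairing on cohomology is perfect (elementwise formulation). -/
def CohomPerfect : Prop :=
  X.CohomNondeg ∧
    ∀ i : ℤ, ∀ φ : ↥(LinearMap.ker X.d ⊓ X.grading (X.n - i)) →ₗ[ℝ] ℝ,
      (∀ y : ↥(LinearMap.ker X.d ⊓ X.grading (X.n - i)),
          (∃ z : A, (y : A) = X.d z) → φ y = 0) →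
      ∃ x ∈ LinearMap.ker X.d ⊓ X.grading i,
        ∀ y : ↥(LinearMap.ker X.d ⊓ X.grading (X.n - i)), X.pair x (y : A) = φ y

end PairedComplex

namespace PairedComplex

variable {A : Type*} [AddCommGroup A] [Module ℝ A] (X : PairedComplex A)

/-- A realization of the nondegenerate quotient `Q(A) = A / A_deg`:
a surjective chain map with kernel `A_deg` preserving pairings, gradings and degree. -/
def IsQuotientMap {B : Type*} [AddCommGroup B] [Module ℝ B]
    (Y : PairedComplex B) (q : A →ₗ[ℝ] B) : Prop :=
  Function.Surjective q ∧
  LinearMap.ker q = X.degSub ∧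
  (∀ x : A, q (X.d x) = Y.d (q x)) ∧
  (∀ x y : A, Y.pair (q x) (q y) = X.pair x y) ∧
  (∀ i : ℤ, ∀ x ∈ X.grading i, q x ∈ Y.grading i) ∧
  Y.n = X.n

/-- A Hodge star on a nonnegatively graded cochain complex with pairing of degree `n`:
a degree-reversing involution (up to sign) such that `(x,y) := ⟨x,⋆y⟩` is a positive
definite inner product. -/
def IsHodgeStar (star : A →ₗ[ℝ] A) : Prop :=
  (∀ i : ℤ, ∀ x ∈ X.grading i, star x ∈ X.grading (X.n - i)) ∧
  (∀ i : ℤ, ∀ x ∈ X.grading i, star (star x) = ((-1 : ℝ) ^ (i * (X.n - i))) • x) ∧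
  (∀ x y : A, X.pair x (star y) = X.pair y (star x)) ∧
  (∀ x : A, x ≠ 0 → 0 < X.pair x (star x))

end PairedComplex

/-- A differential graded algebra with pairing: a `PairedComplex` together with an
associative product of degree `0` satisfying the Leibniz rule and compatible with the
pairing. -/
structure PairedDGA (A : Type*) [AddCommGroup A] [Module ℝ A] extends
    PairedComplex A where
  /-- the product -/
  mul : A →ₗ[ℝ] A →ₗ[ℝ] A
  mul_degree : ∀ i j : ℤ, ∀ x ∈ grading i, ∀ y ∈ grading j, mul x y ∈ grading (i + j)
  mul_assoc' : ∀ x y z : A, mul (mul x y) z = mul x (mul y z)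
  leibniz : ∀ i : ℤ, ∀ x ∈ grading i, ∀ y : A,
      d (mul x y) = mul (d x) y + ((-1 : ℝ) ^ i) • mul x (d y)
  pair_mul : ∀ x y z : A, pair (mul x y) z = pair x (mul y z)

namespace PairedDGA

variable {A : Type*} [AddCommGroup A] [Module ℝ A] (Y : PairedDGA A)

/-- `one` is a unit for the product. -/
def IsUnit (one : A) : Prop :=
  one ≠ 0 ∧ one ∈ Y.grading 0 ∧ ∀ x : A, Y.mul one x = x ∧ Y.mul x one = x

/-- graded commutativity. -/
def IsCommutative : Prop :=
  ∀ i j : ℤ, ∀ x ∈ Y.grading i, ∀ y ∈ Y.grading j,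
    Y.mul x y = ((-1 : ℝ) ^ (i * j)) • Y.mul y x

/-- An orientation of degree `n` inducing the pairing: a chain-level functional
supported in degree `n`, vanishing on boundaries, nontrivial on cohomology,
with `⟨x,y⟩ = o(x∧y)`. -/
def IsOrientation (o : A →ₗ[ℝ] ℝ) : Prop :=
  (∀ i : ℤ, i ≠ Y.n → ∀ x ∈ Y.grading i, o x = 0) ∧
  (∀ x : A, o (Y.d x) = 0) ∧
  (∃ x : A, Y.d x = 0 ∧ o x ≠ 0) ∧
  (∀ x y : A, Y.pair x y = o (Y.mul x y))

/-- The small subalgebra `S_P`: the smallest graded dg-subalgebra containing the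
harmonic subspace `H_P = im π_P` and preserved by `P`. -/
def smallSub (P : A →ₗ[ℝ] A) : Submodule ℝ A :=
  sInf {S : Submodule ℝ A |
    LinearMap.range (Y.toPairedComplex.assocProj P) ≤ S ∧
    Y.toPairedComplex.IsGradedSubspace S ∧
    (∀ x ∈ S, Y.d x ∈ S) ∧
    (∀ x ∈ S, ∀ y ∈ S, Y.mul x y ∈ S) ∧
    (∀ x ∈ S, P x ∈ S)}

end PairedDGA

/-- Elements of `A` obtained from homogeneous elements of the harmonic subspace
`H_P = im π_P` by iterated applications of `P` and of the product. -/
inductive TreeGen {A : Type*} [AddCommGroup A] [Module ℝ A]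
    (Y : PairedDGA A) (P : A →ₗ[ℝ] A) : A → Prop
  | base : ∀ (i : ℤ) (x : A), x ∈ Y.grading i →
      x ∈ LinearMap.range (Y.toPairedComplex.assocProj P) → TreeGen Y P x
  | mul : ∀ x y : A, TreeGen Y P x → TreeGen Y P y → TreeGen Y P (Y.mul x y)
  | app : ∀ x : A, TreeGen Y P x → TreeGen Y P (P x)



namespace Stmt15Aux

open DirectSum

variable {A : Type*} [AddCommGroup A] [Module ℝ A] (X : PairedComplex A)

/-- The grading decomposition as a linear equivalence. -/
noncomputable def dec : (⨁ i, X.grading i) ≃ₗ[ℝ] A :=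
  LinearEquiv.ofBijective (DirectSum.coeLinearMap X.grading) X.internal

/-- Projection onto the degree `i` component. -/
noncomputable def proj (i : ℤ) : A →ₗ[ℝ] A :=
  (X.grading i).subtype ∘ₗ
    (DirectSum.component ℝ ℤ (fun j => ↥(X.grading j)) i) ∘ₗ (dec X).symm.toLinearMap

lemma proj_apply (i : ℤ) (x : A) : proj X i x = (((dec X).symm x) i : A) := rfl

lemma proj_mem (i : ℤ) (x : A) : proj X i x ∈ X.grading i := (((dec X).symm x) i).2

lemma proj_of_mem {i : ℤ} {x : A} (hx : x ∈ X.grading i) : proj X i x = x := by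
  rw [proj_apply]
  rw [show (dec X).symm x i = ⟨x, hx⟩ from X.internal.ofBijective_coeLinearMap_of_mem hx]

lemma proj_of_mem_ne {i j : ℤ} (hij : i ≠ j) {x : A} (hx : x ∈ X.grading i) :
    proj X j x = 0 := by
  rw [proj_apply]
  rw [show (dec X).symm x j = 0 from X.internal.ofBijective_coeLinearMap_of_mem_ne hij hx]
  rfl

lemma mem_iSup_grading (x : A) : x ∈ ⨆ i, X.grading i := by
  rw [X.internal.submodule_iSup_eq_top]; trivial

lemma proj_d (i : ℤ) (x : A) : proj X i (X.d x) = X.d (proj X (i - 1) x) := by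
  refine Submodule.iSup_induction (motive := fun y => proj X i (X.d y) = X.d (proj X (i - 1) y))
    X.grading (mem_iSup_grading X x) ?_ ?_ ?_
  · intro j y hy
    by_cases hij : i = j + 1
    · subst hij
      rw [proj_of_mem X (X.d_degree j y hy),
        show j + 1 - 1 = j by ring, proj_of_mem X hy]
    · rw [proj_of_mem_ne X (show j + 1 ≠ i from fun h => hij h.symm) (X.d_degree j y hy),
        proj_of_mem_ne X (show j ≠ i - 1 by omega) hy, map_zero]
  · simp
  · intro a b ha hb
    rw [map_add, map_add, ha, hb, map_add, map_add]

lemma graded_proj {S : Submodule ℝ A} (hS : X.IsGradedSubspace S) {x : A} (hx : x ∈ S)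
    (i : ℤ) : proj X i x ∈ S := by
  refine Submodule.iSup_induction (motive := fun y => proj X i y ∈ S)
    (fun j => S ⊓ X.grading j) (hS x hx) ?_ ?_ ?_
  · intro j y hy
    by_cases hij : j = i
    · subst hij; rw [proj_of_mem X hy.2]; exact hy.1
    · rw [proj_of_mem_ne X hij hy.2]; exact zero_mem S
  · simp
  · intro a b ha hb
    have : proj X i (a + b) = proj X i a + proj X i b := map_add _ _ _
    show proj X i (a + b) ∈ S
    rw [this]; exact add_mem ha hb

lemma neg_one_zpow_sq (i : ℤ) : ((-1 : ℝ) ^ i) * ((-1 : ℝ) ^ i) = 1 := by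
  rw [← zpow_add₀ (by norm_num : (-1 : ℝ) ≠ 0)]
  rw [show i + i = 2 * i by ring, zpow_mul]
  norm_num

end Stmt15Aux


section Statements

variable {A B : Type*} [AddCommGroup A] [Module ℝ A] [AddCommGroup B] [Module ℝ B]
/-- `(id − π)∘P^A` is a propagator with respect to a symmetric
quasi-isomorphic projection `π` onto a subcomplex `B`, for a Hodge decomposition
relative to `B`; it is special when `π` respects the decompositions. -/
theorem stmt15 (X : PairedComplex A) (Bsub : Submodule ℝ A) (hB : X.IsSubcomplex Bsub)
    (H C : Submodule ℝ A) (hHC : X.IsHodge H C)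
    (hrel : X.IsHodgeOn Bsub (Bsub ⊓ H) (Bsub ⊓ C))
    (PA : A →ₗ[ℝ] A) (hPA : X.IsHodgeOperator H C PA)
    (π : A →ₗ[ℝ] A) (hπ : X.IsProjection π) (hsym : X.IsSymmetric π)
    (hrange : LinearMap.range π = Bsub) (hqi : X.IsQuasiIso π)
    (P : A →ₗ[ℝ] A) (hP : P = (LinearMap.id - π) ∘ₗ PA) :
    (X.IsPropagator P ∧ X.assocProj P = π) ∧
    ((∀ h ∈ H, π h ∈ Bsub ⊓ H) → (∀ c ∈ C, π c ∈ Bsub ⊓ C) → X.IsSpecial P) := by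
  classical
  open Stmt15Aux in
  obtain ⟨hBgr, hBd⟩ := hB
  obtain ⟨-, -, hHgr, hCgr, hHker, hHd_bot, hHd_sup, hCk_bot, hCk_sup, hCC, hCH⟩ := hHC
  obtain ⟨-, -, -, -, -, -, hrel7, -, hrel9, -, -⟩ := hrel
  obtain ⟨hPAdC, hPAH, hPAC⟩ := hPA
  obtain ⟨⟨hπdeg, hπd⟩, hπidem⟩ := hπ
  -- `π` fixes `Bsub`
  have hfixB : ∀ b ∈ Bsub, π b = b := by
    intro b hb
    rw [← hrange] at hb
    obtain ⟨y, rfl⟩ := hb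
    exact hπidem y
  have hπmemB : ∀ x : A, π x ∈ Bsub := by
    intro x; rw [← hrange]; exact ⟨x, rfl⟩
  -- pointwise formula for `P`
  have hPeq : ∀ x : A, P x = PA x - π (PA x) := by
    intro x; rw [hP]; rfl
  -- global Hodge decomposition of elements
  have hdecomp : ∀ x : A, ∃ h ∈ H, ∃ c ∈ C, ∃ c' ∈ C, x = h + X.d c + c' := by
    intro x
    have hx : x ∈ C ⊔ (LinearMap.ker X.d ⊓ ⊤) := by rw [hCk_sup]; trivial
    obtain ⟨c₀, hc₀, k, hk, hsum⟩ := Submodule.mem_sup.mp hx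
    have hk2 : k ∈ H ⊔ Submodule.map X.d ⊤ := by rw [hHd_sup]; exact hk
    obtain ⟨h, hh, w, hw, hsum2⟩ := Submodule.mem_sup.mp hk2
    obtain ⟨a, -, rfl⟩ := hw
    have ha : a ∈ C ⊔ (LinearMap.ker X.d ⊓ ⊤) := by rw [hCk_sup]; trivial
    obtain ⟨c₁, hc₁, k₁, hk₁, hsuma⟩ := Submodule.mem_sup.mp ha
    have hda : X.d a = X.d c₁ := by
      rw [← hsuma, map_add, LinearMap.mem_ker.mp hk₁.1, add_zero]
    refine ⟨h, hh, c₁, hc₁, c₀, hc₀, ?_⟩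
    rw [← hsum, ← hsum2, hda]; abel
  -- decomposition of elements of `Bsub`
  have hdecompB : ∀ b ∈ Bsub,
      ∃ h ∈ Bsub ⊓ H, ∃ b' ∈ Bsub, ∃ g ∈ Bsub ⊓ C, b = h + X.d b' + g := by
    intro b hb
    have hb2 : b ∈ (Bsub ⊓ C) ⊔ (LinearMap.ker X.d ⊓ Bsub) := by rw [hrel9]; exact hb
    obtain ⟨g, hg, k, hk, hsum⟩ := Submodule.mem_sup.mp hb2
    have hk2 : k ∈ (Bsub ⊓ H) ⊔ Submodule.map X.d Bsub := by rw [hrel7]; exact hk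
    obtain ⟨h, hh, w, hw, hsum2⟩ := Submodule.mem_sup.mp hk2
    obtain ⟨b', hb', rfl⟩ := hw
    exact ⟨h, hh, b', hb', g, hg, by rw [← hsum, ← hsum2]; abel⟩
  -- `H ⊆ Bsub` using the quasi-isomorphism property
  have hHB : ∀ h ∈ H, h ∈ Bsub := by
    intro h hh
    have hdh : X.d h = 0 := LinearMap.mem_ker.mp (hHker hh)
    obtain ⟨y, hdy, z, hz⟩ := hqi.1 h hdh
    have hπyB : π y ∈ Bsub := hπmemB y
    have hπyk : X.d (π y) = 0 := by rw [← hπd, hdy, map_zero]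
    have hmem : π y ∈ (Bsub ⊓ H) ⊔ Submodule.map X.d Bsub := by
      rw [hrel7]; exact ⟨LinearMap.mem_ker.mpr hπyk, hπyB⟩
    obtain ⟨hB', hhB', w, hw, hsum⟩ := Submodule.mem_sup.mp hmem
    obtain ⟨b, hbB, rfl⟩ := hw
    have hdiff : h - hB' ∈ H ⊓ Submodule.map X.d ⊤ := by
      refine ⟨sub_mem hh hhB'.2, ⟨b - z, trivial, ?_⟩⟩
      rw [map_sub]
      have : h = hB' + X.d b - X.d z := by rw [hsum, ← hz]; abel
      rw [this]; abel
    rw [hHd_bot] at hdiff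
    have h0 : h - hB' = 0 := hdiff
    have : h = hB' := by rwa [sub_eq_zero] at h0
    rw [this]; exact hhB'.1
  -- vanishing lemmas
  have V1 : ∀ (b y : A), X.d y = 0 → X.pair (X.d b) y = 0 := by
    intro b y hy
    refine Submodule.iSup_induction (motive := fun b => X.pair (X.d b) y = 0)
      X.grading (mem_iSup_grading X b) ?_ ?_ ?_
    · intro j b hb
      rw [X.pair_d j b hb y, hy, map_zero, mul_zero]
    · simp
    · intro a b ha hb
      rw [map_add, map_add, LinearMap.add_apply, ha, hb, add_zero]
  have V2 : ∀ h ∈ H, ∀ b : A, X.pair h (X.d b) = 0 := by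
    intro h hh
    refine Submodule.iSup_induction (motive := fun h => ∀ b : A, X.pair h (X.d b) = 0)
      (fun j => H ⊓ X.grading j) (hHgr h hh) ?_ ?_ ?_
    · intro j h hhj b
      have hdh : X.d h = 0 := LinearMap.mem_ker.mp (hHker hhj.1)
      refine Submodule.iSup_induction (motive := fun b => X.pair h (X.d b) = 0)
        X.grading (mem_iSup_grading X b) ?_ ?_ ?_
      · intro m b hb
        rw [X.pair_symm j (m + 1) h hhj.2 (X.d b) (X.d_degree m b hb),
          X.pair_d m b hb h, hdh, map_zero, mul_zero, mul_zero]
      · simp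
      · intro a b ha hb
        rw [map_add, map_add, ha, hb, add_zero]
    · simp
    · intro a b ha hb c
      rw [map_add, LinearMap.add_apply, ha, hb, add_zero]
  have V3 : ∀ h ∈ H, ∀ c ∈ C, X.pair h c = 0 := by
    intro h hh
    refine Submodule.iSup_induction (motive := fun h => ∀ c ∈ C, X.pair h c = 0)
      (fun j => H ⊓ X.grading j) (hHgr h hh) ?_ ?_ ?_
    · intro j h hhj c hc
      refine Submodule.iSup_induction (motive := fun c => X.pair h c = 0)
        (fun k => C ⊓ X.grading k) (hCgr c hc) ?_ ?_ ?_
      · intro k c hck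
        rw [X.pair_symm j k h hhj.2 c hck.2, hCH c hck.1 h hhj.1, mul_zero]
      · simp
      · intro a b ha hb
        rw [map_add, ha, hb, add_zero]
    · simp
    · intro a b ha hb c hc
      rw [map_add, LinearMap.add_apply, ha c hc, hb c hc, add_zero]
  -- the key orthogonality lemma : `⟨π c, f⟩ = 0` for `c, f ∈ C`
  have KEY : ∀ c ∈ C, ∀ f ∈ C, X.pair (π c) f = 0 := by
    intro c hc f hf
    obtain ⟨h₁, hh₁, b₁, hb₁, g₁, hg₁, e₁⟩ := hdecompB (π c) (hπmemB c)
    obtain ⟨h₂, hh₂, b₂, hb₂, g₂, hg₂, e₂⟩ := hdecompB (π f) (hπmemB f)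
    have hdb₂B : X.d b₂ ∈ Bsub := hBd b₂ hb₂
    have step1 : X.pair (π c) f = X.pair c (X.d b₂) := by
      rw [hsym c f, e₂, map_add, map_add, hCH c hc h₂ hh₂.2, hCC c hc g₂ hg₂.2,
        zero_add, add_zero]
    have step3 : X.pair g₁ (X.d b₂) = 0 := by
      have e2' : X.pair g₁ (π f) =
          X.pair g₁ h₂ + X.pair g₁ (X.d b₂) + X.pair g₁ g₂ := by
        rw [e₂, map_add, map_add]
      have z1 : X.pair g₁ (π f) = 0 := by
        rw [← hsym g₁ f, hfixB g₁ hg₁.1]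
        exact hCC g₁ hg₁.2 f hf
      have z2 : X.pair g₁ h₂ = 0 := hCH g₁ hg₁.2 h₂ hh₂.2
      have z3 : X.pair g₁ g₂ = 0 := hCC g₁ hg₁.2 g₂ hg₂.2
      rw [z1, z2, z3] at e2'
      linarith
    have step2 : X.pair c (X.d b₂) = 0 := by
      rw [← hfixB (X.d b₂) hdb₂B, ← hsym c (X.d b₂), e₁, map_add, map_add,
        LinearMap.add_apply, LinearMap.add_apply,
        V2 h₁ hh₁.2 b₂, V1 b₁ (X.d b₂) (X.d_sq b₂), step3]
      ring
    rw [step1, step2]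
  -- `assocProj P = π`
  have hassoc : X.assocProj P = π := by
    ext x
    have hax : X.assocProj P x = x + X.d (P x) + P (X.d x) := by
      simp [PairedComplex.assocProj]
    obtain ⟨h, hh, c, hc, c', hc', heq⟩ := hdecomp x
    have hdh : X.d h = 0 := LinearMap.mem_ker.mp (hHker hh)
    have hPAx : PA x = -c := by
      rw [heq, map_add, map_add, hPAH h hh, hPAdC c hc, hPAC c' hc']
      abel
    have hPx : P x = -c + π c := by
      rw [hPeq, hPAx, map_neg]; abel
    have hdx : X.d x = X.d c' := by
      rw [heq, map_add, map_add, hdh, X.d_sq, zero_add, zero_add]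
    have hPdx : P (X.d x) = -c' + π c' := by
      rw [hdx, hPeq, hPAdC c' hc', map_neg]; abel
    have hπx : π x = h + X.d (π c) + π c' := by
      rw [heq, map_add, map_add, hfixB h (hHB h hh), hπd]
    rw [hax, hPx, hPdx, hπx, heq, map_add, map_neg]
    abel
  -- pointwise formula for the associated projection
  have hπpt : ∀ x : A, x + X.d (P x) + P (X.d x) = π x := by
    intro x
    have := congrArg (fun (f : A →ₗ[ℝ] A) => f x) hassoc
    simpa [PairedComplex.assocProj] using this
  have qdef : ∀ x : A, (-(X.d ∘ₗ P) - P ∘ₗ X.d) x = x - π x := by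
    intro x
    have h1 := hπpt x
    simp only [LinearMap.sub_apply, LinearMap.neg_apply, LinearMap.comp_apply]
    rw [← h1]; abel
  -- refined homogeneous decomposition
  have hrefined : ∀ (i : ℤ), ∀ x ∈ X.grading i,
      ∃ h ∈ H, ∃ c ∈ C ⊓ X.grading (i - 1), ∃ c' ∈ C, x = h + X.d c + c' := by
    intro i x hx
    obtain ⟨h₀, hh₀, c₀, hc₀, c₀', hc₀', heq⟩ := hdecomp x
    refine ⟨proj X i h₀, graded_proj X hHgr hh₀ i,
      proj X (i - 1) c₀, ⟨graded_proj X hCgr hc₀ (i - 1), proj_mem X (i - 1) c₀⟩,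
      proj X i c₀', graded_proj X hCgr hc₀' i, ?_⟩
    have hx' : proj X i x = x := proj_of_mem X hx
    calc x = proj X i x := hx'.symm
    _ = proj X i h₀ + proj X i (X.d c₀) + proj X i c₀' := by
        rw [heq, map_add, map_add]
    _ = proj X i h₀ + X.d (proj X (i - 1) c₀) + proj X i c₀' := by
        rw [proj_d]
  -- degree of `P`
  have hdeg : X.IsDegree P (-1) := by
    intro i x hx
    obtain ⟨h, hh, c, hc, c', hc', heq⟩ := hrefined i x hx
    have hPAx : PA x = -c := by
      rw [heq, map_add, map_add, hPAH h hh, hPAdC c hc.1, hPAC c' hc']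
      abel
    have hPx : P x = -c + π c := by rw [hPeq, hPAx, map_neg]; abel
    rw [show i + (-1 : ℤ) = i - 1 by ring, hPx]
    refine add_mem (neg_mem hc.2) ?_
    have := hπdeg (i - 1) c hc.2
    rwa [add_zero] at this
  -- symmetry of `P`
  have hsymP : X.IsSymmetricDeg P := by
    intro i x hx y
    obtain ⟨h, hh, c, hc, c', hc', heqx⟩ := hrefined i x hx
    obtain ⟨k, hk, e, he, e', he', heqy⟩ := hdecomp y
    have hPAx : PA x = -c := by
      rw [heqx, map_add, map_add, hPAH h hh, hPAdC c hc.1, hPAC c' hc']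
      abel
    have hPx : P x = -c + π c := by rw [hPeq, hPAx, map_neg]; abel
    have hPAy : PA y = -e := by
      rw [heqy, map_add, map_add, hPAH k hk, hPAdC e he, hPAC e' he']
      abel
    have hPy : P y = -e + π e := by rw [hPeq, hPAy, map_neg]; abel
    have hL : X.pair (P x) y = -(X.pair c (X.d e)) + X.pair c (X.d (π e)) := by
      rw [hPx, heqy]
      simp only [map_add, map_neg, LinearMap.add_apply, LinearMap.neg_apply]
      rw [hCH c hc.1 k hk, hCC c hc.1 e' he']
      have h1 : X.pair (π c) k = 0 := by
        rw [hsym c k, hfixB k (hHB k hk)]; exact hCH c hc.1 k hk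
      have h2 : X.pair (π c) e' = 0 := KEY c hc.1 e' he'
      have h3 : X.pair (π c) (X.d e) = X.pair c (X.d (π e)) := by
        rw [hsym c (X.d e), hπd]
      rw [h1, h2, h3]
      ring
    have hR : X.pair x (P y) = -(X.pair (X.d c) e) + X.pair (X.d c) (π e) := by
      rw [hPy, heqx]
      simp only [map_add, map_neg, LinearMap.add_apply, LinearMap.neg_apply]
      rw [V3 h hh e he, hCC c' hc' e he]
      have h1 : X.pair h (π e) = 0 := by
        rw [← hsym h e, hfixB h (hHB h hh)]; exact V3 h hh e he
      have h2 : X.pair c' (π e) = 0 := by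
        rw [← hsym c' e]; exact KEY c' hc' e he
      rw [h1, h2]
      ring
    have hd1 : X.pair (X.d c) e = (-1 : ℝ) ^ i * X.pair c (X.d e) := by
      have := X.pair_d (i - 1) c hc.2 e
      rwa [show 1 + (i - 1) = i by ring] at this
    have hd2 : X.pair (X.d c) (π e) = (-1 : ℝ) ^ i * X.pair c (X.d (π e)) := by
      have := X.pair_d (i - 1) c hc.2 (π e)
      rwa [show 1 + (i - 1) = i by ring] at this
    have hss := neg_one_zpow_sq i
    rw [hL, hR, hd1, hd2]
    linear_combination (X.pair c (X.d e) - X.pair c (X.d (π e))) * hss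
  -- the homotopy-operator projection
  have hproj : X.IsProjection (-(X.d ∘ₗ P) - P ∘ₗ X.d) := by
    refine ⟨⟨?_, ?_⟩, ?_⟩
    · intro i x hx
      rw [qdef, show i + (0 : ℤ) = i by ring]
      refine sub_mem hx ?_
      have := hπdeg i x hx
      rwa [add_zero] at this
    · intro x
      rw [qdef, qdef, map_sub, hπd]
    · intro x
      rw [qdef, qdef, map_sub, hπidem]
      abel
  refine ⟨⟨⟨⟨hdeg, hproj⟩, hsymP⟩, hassoc⟩, ?_⟩
  -- specialness
  intro hπH hπC
  constructor
  · intro x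
    obtain ⟨h, hh, c, hc, c', hc', heq⟩ := hdecomp x
    have hPAx : PA x = -c := by
      rw [heq, map_add, map_add, hPAH h hh, hPAdC c hc, hPAC c' hc']
      abel
    have hPx : P x = -c + π c := by rw [hPeq, hPAx, map_neg]; abel
    have hπcC : π c ∈ C := (hπC c hc).2
    have hPc : P c = 0 := by rw [hPeq, hPAC c hc, map_zero, sub_zero]
    have hPπc : P (π c) = 0 := by rw [hPeq, hPAC (π c) hπcC, map_zero, sub_zero]
    rw [hPx, map_add, map_neg, hPc, hPπc]
    abel
  · intro x
    obtain ⟨h, hh, c, hc, c', hc', heq⟩ := hdecomp x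
    have hPAx : PA x = -c := by
      rw [heq, map_add, map_add, hPAH h hh, hPAdC c hc, hPAC c' hc']
      abel
    have hPx : P x = -c + π c := by rw [hPeq, hPAx, map_neg]; abel
    have hπcC : π c ∈ C := (hπC c hc).2
    have hPdc : P (X.d c) = -c + π c := by
      rw [hPeq, hPAdC c hc, map_neg]; abel
    have hPdπc : P (X.d (π c)) = 0 := by
      rw [hPeq, hPAdC (π c) hπcC, map_neg, hπidem]; abel
    rw [hPx]
    simp only [map_add, map_neg]
    rw [hPdc, hPdπc]
    abel

end Statements
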